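/- Let R be an invertible N²×N² complex matrix satisfying the Yang–Baxter equation, and let A be an N×N complex matrix of rank M such that (A ⊗ₖ A) * R = R * (A ⊗ₖ A). Then there exist an N×M matrix Q of rank M, an M×N matrix P of rank M, and an invertible M²×M² matrix S satisfying the Yang–Baxter equation, such that Q * P = A, R * (Q ⊗ₖ Q) = (Q ⊗ₖ Q) * S, and S * (P ⊗ₖ P) = (P ⊗ₖ P) * R. (That is, a rank-M endomorphism of the Yang–Baxter object (N,R) yields (M,S) that is simultaneously a subobject and a quotient object of (N,R).) -/

import Mathlib

open Matrix Kronecker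

/-- `R ⊗ₖ 1`, viewed as a matrix indexed by `ι × ι × ι` via the canonical
associativity reindexing. -/
def ybL {ι : Type*} [DecidableEq ι] (R : Matrix (ι × ι) (ι × ι) ℂ) :
    Matrix (ι × ι × ι) (ι × ι × ι) ℂ :=
  Matrix.reindex (Equiv.prodAssoc ι ι ι) (Equiv.prodAssoc ι ι ι)
    (R ⊗ₖ (1 : Matrix ι ι ℂ))

/-- `1 ⊗ₖ R`, indexed by `ι × ι × ι`. -/
def ybR {ι : Type*} [DecidableEq ι] (R : Matrix (ι × ι) (ι × ι) ℂ) :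
    Matrix (ι × ι × ι) (ι × ι × ι) ℂ :=
  (1 : Matrix ι ι ℂ) ⊗ₖ R

/-- The (constant) Yang–Baxter equation. -/
def SatisfiesYBE {ι : Type*} [Fintype ι] [DecidableEq ι]
    (R : Matrix (ι × ι) (ι × ι) ℂ) : Prop :=
  ybL R * ybR R * ybL R = ybR R * ybL R * ybR R


private theorem aux_matrix_part (N M : ℕ)
    (R : Matrix (Fin N × Fin N) (Fin N × Fin N) ℂ)
    (hRu : IsUnit R) (hRY : SatisfiesYBE R)
    (A : Matrix (Fin N) (Fin N) ℂ)
    (hcomm : (A ⊗ₖ A) * R = R * (A ⊗ₖ A))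
    (Q : Matrix (Fin N) (Fin M) ℂ) (P : Matrix (Fin M) (Fin N) ℂ)
    (Q' : Matrix (Fin M) (Fin N) ℂ) (P' : Matrix (Fin N) (Fin M) ℂ)
    (H : Matrix (Fin N) (Fin M) ℂ)
    (hQP : Q * P = A) (hQ'Q : Q' * Q = 1) (hPP' : P * P' = 1) (hAH : A * H = Q) :
    ∃ (S : Matrix (Fin M × Fin M) (Fin M × Fin M) ℂ),
      IsUnit S ∧ SatisfiesYBE S ∧
      R * (Q ⊗ₖ Q) = (Q ⊗ₖ Q) * S ∧
      S * (P ⊗ₖ P) = (P ⊗ₖ P) * R := by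
  classical
  have hRdet : IsUnit R.det := (Matrix.isUnit_iff_isUnit_det R).1 hRu
  have hRinv : R * R⁻¹ = 1 := Matrix.mul_nonsing_inv R hRdet
  set Q₂ := Q ⊗ₖ Q with hQ₂
  set P₂ := P ⊗ₖ P with hP₂
  set Q₂' := Q' ⊗ₖ Q' with hQ₂'
  set P₂' := P' ⊗ₖ P' with hP₂'
  set H₂ := H ⊗ₖ H with hH₂
  have k1 : Q₂' * Q₂ = 1 := by
    rw [hQ₂, hQ₂', ← Matrix.mul_kronecker_mul, hQ'Q, Matrix.one_kronecker_one]
  have k2 : Q₂ * P₂ = A ⊗ₖ A := by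
    rw [hQ₂, hP₂, ← Matrix.mul_kronecker_mul, hQP]
  have k3 : (A ⊗ₖ A) * H₂ = Q₂ := by
    rw [hQ₂, hH₂, ← Matrix.mul_kronecker_mul, hAH]
  have k4 : P₂ * P₂' = 1 := by
    rw [hP₂, hP₂', ← Matrix.mul_kronecker_mul, hPP', Matrix.one_kronecker_one]
  set S := Q₂' * R * Q₂ with hS
  set T := P₂ * (R * H₂) with hT
  have hRQ : R * Q₂ = Q₂ * T := by
    conv_lhs => rw [← k3]
    rw [← Matrix.mul_assoc R, ← hcomm, ← k2]
    simp only [Matrix.mul_assoc]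
    rw [hT]
  have hQ₂S : Q₂ * S = Q₂ * T := by
    rw [hS]
    simp only [Matrix.mul_assoc]
    rw [hRQ, ← Matrix.mul_assoc Q₂', k1, Matrix.one_mul]
  have hQS : R * Q₂ = Q₂ * S := hRQ.trans hQ₂S.symm
  have hSP : S * P₂ = P₂ * R := by
    rw [hS]
    simp only [Matrix.mul_assoc]
    rw [k2, ← hcomm, ← k2]
    simp only [← Matrix.mul_assoc]
    rw [k1, Matrix.one_mul]
  have hSu : IsUnit S := by
    have hmul : S * (P₂ * (R⁻¹ * P₂')) = 1 := by
      rw [← Matrix.mul_assoc S, hSP, Matrix.mul_assoc, ← Matrix.mul_assoc R,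
        hRinv, Matrix.one_mul, k4]
    have hdet : S.det * (P₂ * (R⁻¹ * P₂')).det = 1 := by
      rw [← Matrix.det_mul, hmul, Matrix.det_one]
    exact (Matrix.isUnit_iff_isUnit_det S).2 (isUnit_iff_exists_inv.2 ⟨_, hdet⟩)
  -- YBE for S
  set Q₃ := Q ⊗ₖ Q₂ with hQ₃
  set Q₃' := Q' ⊗ₖ Q₂' with hQ₃'
  have k5 : Q₃' * Q₃ = 1 := by
    rw [hQ₃, hQ₃', ← Matrix.mul_kronecker_mul, hQ'Q, k1, Matrix.one_kronecker_one]
  have hQ₃alt : (Q₂ ⊗ₖ Q).submatrix (Equiv.prodAssoc (Fin N) (Fin N) (Fin N)).symm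
      (Equiv.prodAssoc (Fin M) (Fin M) (Fin M)).symm = Q₃ :=
    Matrix.kronecker_assoc' Q Q Q
  have hcore : (R ⊗ₖ (1 : Matrix (Fin N) (Fin N) ℂ)) * (Q₂ ⊗ₖ Q)
      = (Q₂ ⊗ₖ Q) * (S ⊗ₖ (1 : Matrix (Fin M) (Fin M) ℂ)) := by
    rw [← Matrix.mul_kronecker_mul, ← Matrix.mul_kronecker_mul, hQS,
      Matrix.one_mul, Matrix.mul_one]
  have hL : ybL R * Q₃ = Q₃ * ybL S := by
    rw [ybL, ybL, Matrix.reindex_apply, Matrix.reindex_apply, ← hQ₃alt,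
      Matrix.submatrix_mul_equiv, Matrix.submatrix_mul_equiv, hcore]
  have hRr : ybR R * Q₃ = Q₃ * ybR S := by
    rw [ybR, ybR, hQ₃, ← Matrix.mul_kronecker_mul, ← Matrix.mul_kronecker_mul,
      hQS, Matrix.one_mul, Matrix.mul_one]
  have hprodL : ybL R * ybR R * ybL R * Q₃ = Q₃ * (ybL S * ybR S * ybL S) := by
    simp only [Matrix.mul_assoc]
    rw [hL, ← Matrix.mul_assoc (ybR R), hRr, Matrix.mul_assoc,
      ← Matrix.mul_assoc (ybL R), hL, Matrix.mul_assoc]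
  have hprodR : ybR R * ybL R * ybR R * Q₃ = Q₃ * (ybR S * ybL S * ybR S) := by
    simp only [Matrix.mul_assoc]
    rw [hRr, ← Matrix.mul_assoc (ybL R), hL, Matrix.mul_assoc,
      ← Matrix.mul_assoc (ybR R), hRr, Matrix.mul_assoc]
  have h1 : Q₃' * (ybL R * ybR R * ybL R * Q₃) = ybL S * ybR S * ybL S := by
    rw [hprodL, ← Matrix.mul_assoc, k5, Matrix.one_mul]
  have h2 : Q₃' * (ybR R * ybL R * ybR R * Q₃) = ybR S * ybL S * ybR S := by
    rw [hprodR, ← Matrix.mul_assoc, k5, Matrix.one_mul]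
  have hSY : SatisfiesYBE S := by
    unfold SatisfiesYBE
    rw [← h1, ← h2, hRY]
  exact ⟨S, hSu, hSY, hQS, hSP⟩

/-- a rank-`M` endomorphism `A` of the Yang–Baxter object `(N,R)`
yields an `(M,S)` that is simultaneously a subobject (via `Q`) and a quotient
object (via `P`) of `(N,R)`, with `Q * P = A`. -/
theorem endo_gives_sub_and_quotient (N M : ℕ)
    (R : Matrix (Fin N × Fin N) (Fin N × Fin N) ℂ)
    (hRu : IsUnit R) (hRY : SatisfiesYBE R)
    (A : Matrix (Fin N) (Fin N) ℂ) (hArank : A.rank = M)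
    (hcomm : (A ⊗ₖ A) * R = R * (A ⊗ₖ A)) :
    ∃ (Q : Matrix (Fin N) (Fin M) ℂ) (P : Matrix (Fin M) (Fin N) ℂ)
      (S : Matrix (Fin M × Fin M) (Fin M × Fin M) ℂ),
      Q.rank = M ∧ P.rank = M ∧ IsUnit S ∧ SatisfiesYBE S ∧
      Q * P = A ∧
      R * (Q ⊗ₖ Q) = (Q ⊗ₖ Q) * S ∧
      S * (P ⊗ₖ P) = (P ⊗ₖ P) * R := by

  classical
  set f := Matrix.toLin' A with hfdef
  have hfin : Module.finrank ℂ (LinearMap.range f) = M := by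
    rw [← hArank, Matrix.rank, hfdef, Matrix.toLin'_apply']
  let b : Module.Basis (Fin M) ℂ (LinearMap.range f) :=
    Module.finBasisOfFinrankEq ℂ _ hfin
  let q : (Fin M → ℂ) →ₗ[ℂ] (Fin N → ℂ) :=
    (LinearMap.range f).subtype ∘ₗ (b.equivFun.symm : (Fin M → ℂ) ≃ₗ[ℂ] _).toLinearMap
  let p : (Fin N → ℂ) →ₗ[ℂ] (Fin M → ℂ) :=
    (b.equivFun : _ ≃ₗ[ℂ] (Fin M → ℂ)).toLinearMap ∘ₗ f.rangeRestrict
  have hqp : q ∘ₗ p = f := by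
    apply LinearMap.ext; intro x
    show (LinearMap.range f).subtype (b.equivFun.symm (b.equivFun (f.rangeRestrict x))) = f x
    rw [LinearEquiv.symm_apply_apply]
    rfl
  have hq_inj : LinearMap.ker q = ⊥ := by
    rw [LinearMap.ker_eq_bot]
    exact (Submodule.injective_subtype _).comp b.equivFun.symm.injective
  obtain ⟨q', hq'⟩ := q.exists_leftInverse_of_injective hq_inj
  have hp_surj : LinearMap.range p = ⊤ := by
    rw [LinearMap.range_eq_top]
    exact b.equivFun.surjective.comp f.surjective_rangeRestrict
  obtain ⟨p', hp'⟩ := p.exists_rightInverse_of_surjective hp_surj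
  obtain ⟨r, hr⟩ := f.rangeRestrict.exists_rightInverse_of_surjective
    (LinearMap.range_eq_top.2 f.surjective_rangeRestrict)
  let h : (Fin M → ℂ) →ₗ[ℂ] (Fin N → ℂ) :=
    r ∘ₗ (b.equivFun.symm : (Fin M → ℂ) ≃ₗ[ℂ] _).toLinearMap
  have hfh : f ∘ₗ h = q := by
    apply LinearMap.ext; intro x
    show f (r (b.equivFun.symm x)) = (LinearMap.range f).subtype (b.equivFun.symm x)
    have h1 := LinearMap.congr_fun hr (b.equivFun.symm x)
    simp only [LinearMap.comp_apply, LinearMap.id_apply] at h1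
    calc f (r (b.equivFun.symm x)) = ↑(f.rangeRestrict (r (b.equivFun.symm x))) := rfl
      _ = _ := by rw [h1]; rfl
  set Q := LinearMap.toMatrix' q with hQdef
  set P := LinearMap.toMatrix' p with hPdef
  set Q' := LinearMap.toMatrix' q' with hQ'def
  set P' := LinearMap.toMatrix' p' with hP'def
  set H := LinearMap.toMatrix' h with hHdef
  have hQP : Q * P = A := by
    rw [hQdef, hPdef, ← LinearMap.toMatrix'_comp, hqp, hfdef, LinearMap.toMatrix'_toLin']
  have hQ'Q : Q' * Q = 1 := by
    rw [hQ'def, hQdef, ← LinearMap.toMatrix'_comp, hq', LinearMap.toMatrix'_id]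
  have hPP' : P * P' = 1 := by
    rw [hPdef, hP'def, ← LinearMap.toMatrix'_comp, hp', LinearMap.toMatrix'_id]
  have hAH : A * H = Q := by
    rw [← LinearMap.toMatrix'_toLin' A, ← hfdef, hHdef, ← LinearMap.toMatrix'_comp, hfh, hQdef]
  obtain ⟨S, hSu, hSY, hQS, hSP⟩ :=
    aux_matrix_part N M R hRu hRY A hcomm Q P Q' P' H hQP hQ'Q hPP' hAH
  have hQrank : Q.rank = M := by
    refine le_antisymm (by simpa using Q.rank_le_card_width) ?_
    calc M = (1 : Matrix (Fin M) (Fin M) ℂ).rank := by simp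
      _ = (Q' * Q).rank := by rw [hQ'Q]
      _ ≤ Q.rank := Matrix.rank_mul_le_right _ _
  have hPrank : P.rank = M := by
    refine le_antisymm (by simpa using P.rank_le_card_height) ?_
    calc M = (1 : Matrix (Fin M) (Fin M) ℂ).rank := by simp
      _ = (P * P').rank := by rw [hPP']
      _ ≤ P.rank := Matrix.rank_mul_le_left _ _
  exact ⟨Q, P, S, hQrank, hPrank, hSu, hSY, hQP, hQS, hSP⟩
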